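/- Suppose the distinct complex numbers p_1,…,p_n (pairwise distinct) and q_1,…,q_n (pairwise distinct), with {p_j} ∩ {q_j} = ∅, satisfy the vortex system: for each α, Σ_{j≠α} 1/(p_α−p_j) − Σ_j 1/(p_α−q_j) = μ and Σ_{j≠α} 1/(q_α−q_j) − Σ_j 1/(q_α−p_j) = −μ. Define the generating polynomials P(z) = Π_j (z−p_j), Q(z) = Π_j (z−q_j). Then P''Q − 2P'Q' + PQ'' = 2μ(P'Q − PQ'). -/

import Mathlib

open Polynomial

open Finset



lemma deriv_prod_lin {ι : Type*} [DecidableEq ι] (s : Finset ι) (r : ι → ℂ) :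
    derivative (∏ j ∈ s, (X - C (r j))) = ∑ k ∈ s, ∏ j ∈ s.erase k, (X - C (r j)) := by
  induction s using Finset.induction_on with
  | empty => simp
  | @insert a s ha ih =>
    rw [Finset.prod_insert ha, derivative_mul, ih, Finset.sum_insert ha,
      Finset.erase_insert ha]
    simp only [derivative_sub, derivative_X, derivative_C, sub_zero, one_mul]
    rw [Finset.mul_sum]
    congr 1
    refine Finset.sum_congr rfl fun k hk => ?_
    have hka : k ≠ a := fun e => ha (e ▸ hk)
    rw [Finset.erase_insert_of_ne hka.symm,
      Finset.prod_insert (fun h => ha (Finset.mem_of_mem_erase h))]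

lemma tk_eval {n : ℕ} (μ : ℂ) (p q : Fin n → ℂ)
    (hp : Function.Injective p) (hpq : ∀ i j, p i ≠ q j) (α : Fin n)
    (h : (∑ j ∈ Finset.univ.erase α, 1 / (p α - p j)) - (∑ j, 1 / (p α - q j)) = μ) :
    eval (p α) (derivative (derivative (∏ j, (X - C (p j)))) * (∏ j, (X - C (q j)))
      - 2 * derivative (∏ j, (X - C (p j))) * derivative (∏ j, (X - C (q j)))
      + (∏ j, (X - C (p j))) * derivative (derivative (∏ j, (X - C (q j))))
      - C (2*μ) * (derivative (∏ j, (X - C (p j))) * (∏ j, (X - C (q j)))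
          - (∏ j, (X - C (p j))) * derivative (∏ j, (X - C (q j))))) = 0 := by
  classical
  set a := p α with ha
  set D := ∏ j ∈ univ.erase α, (a - p j) with hDdef
  set E := ∏ j : Fin n, (a - q j) with hEdef
  have hpj : ∀ j ∈ univ.erase α, a - p j ≠ 0 := fun j hj =>
    sub_ne_zero.2 fun e => (mem_erase.1 hj).1 (hp e.symm)
  have hqj : ∀ j, a - q j ≠ 0 := fun j => sub_ne_zero.2 (hpq α j)
  -- derivative formulas
  have dP : derivative (∏ j : Fin n, (X - C (p j)))
      = ∑ k : Fin n, ∏ j ∈ univ.erase k, (X - C (p j)) := by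
    exact deriv_prod_lin _ _
  have dQ : derivative (∏ j : Fin n, (X - C (q j)))
      = ∑ k : Fin n, ∏ j ∈ univ.erase k, (X - C (q j)) := by
    exact deriv_prod_lin _ _
  -- eval of P at a
  have hP0 : eval a (∏ j : Fin n, (X - C (p j))) = 0 := by
    rw [eval_prod]
    exact Finset.prod_eq_zero (mem_univ α) (by simp [ha])
  -- eval of P' at a
  have hP1 : eval a (derivative (∏ j : Fin n, (X - C (p j)))) = D := by
    rw [dP, eval_finset_sum, Finset.sum_eq_single α]
    · simp [eval_prod, hDdef]
    · intro k _ hk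
      rw [eval_prod]
      exact Finset.prod_eq_zero (mem_erase.2 ⟨Ne.symm hk, mem_univ α⟩) (by simp [ha])
    · simp
  -- eval of Q at a
  have hQ0 : eval a (∏ j : Fin n, (X - C (q j))) = E := by
    rw [eval_prod]; simp [hEdef]
  have hE : ∀ k, ∏ j ∈ univ.erase k, (a - q j) = (a - q k)⁻¹ * E := by
    intro k
    rw [hEdef, ← Finset.mul_prod_erase _ _ (mem_univ k), inv_mul_cancel_left₀ (hqj k)]
  -- eval of Q' at a
  have hQ1 : eval a (derivative (∏ j : Fin n, (X - C (q j))))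
      = (∑ k, (a - q k)⁻¹) * E := by
    rw [dQ, eval_finset_sum, Finset.sum_mul]
    refine Finset.sum_congr rfl fun k _ => ?_
    rw [eval_prod]
    simp only [eval_sub, eval_X, eval_C]
    rw [hE k]
  -- eval of P'' at a
  have hT : ∀ l ∈ univ.erase α, ∏ j ∈ (univ.erase α).erase l, (a - p j)
      = (a - p l)⁻¹ * D := by
    intro l hl
    rw [hDdef, ← Finset.mul_prod_erase _ _ hl, inv_mul_cancel_left₀ (hpj l hl)]
  have hP2 : eval a (derivative (derivative (∏ j : Fin n, (X - C (p j)))))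
      = 2 * ((∑ l ∈ univ.erase α, (a - p l)⁻¹) * D) := by
    have dP2 : derivative (derivative (∏ j : Fin n, (X - C (p j))))
        = ∑ k : Fin n, ∑ l ∈ univ.erase k, ∏ j ∈ (univ.erase k).erase l, (X - C (p j)) := by
      rw [dP, derivative_sum]
      refine Finset.sum_congr rfl fun k _ => ?_
      exact deriv_prod_lin _ _
    rw [dP2, eval_finset_sum]
    have hsplit : ∀ k : Fin n,
        eval a (∑ l ∈ univ.erase k, ∏ j ∈ (univ.erase k).erase l, (X - C (p j)))
        = if k = α then ∑ l ∈ univ.erase α, ∏ j ∈ (univ.erase α).erase l, (a - p j)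
          else ∏ j ∈ (univ.erase α).erase k, (a - p j) := by
      intro k
      rw [eval_finset_sum]
      by_cases hk : k = α
      · subst hk
        simp only [if_pos rfl]
        refine Finset.sum_congr rfl fun l _ => by rw [eval_prod]; simp
      · rw [if_neg hk, Finset.sum_eq_single α]
        · rw [eval_prod]
          simp only [eval_sub, eval_X, eval_C]
          rw [Finset.erase_right_comm]
        · intro l hl hlα
          rw [eval_prod]
          refine Finset.prod_eq_zero (mem_erase.2 ⟨Ne.symm hlα, mem_erase.2 ⟨Ne.symm hk, mem_univ α⟩⟩) (by simp [ha])
        · intro hα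
          exact absurd (mem_erase.2 ⟨Ne.symm hk, mem_univ α⟩) hα
    rw [Finset.sum_congr rfl fun k _ => hsplit k]
    rw [← Finset.add_sum_erase _ _ (mem_univ α)]
    rw [if_pos rfl]
    have : ∑ k ∈ univ.erase α, (if k = α then ∑ l ∈ univ.erase α, ∏ j ∈ (univ.erase α).erase l, (a - p j)
          else ∏ j ∈ (univ.erase α).erase k, (a - p j))
        = ∑ k ∈ univ.erase α, ∏ j ∈ (univ.erase α).erase k, (a - p j) := by
      refine Finset.sum_congr rfl fun k hk => if_neg (mem_erase.1 hk).1
    rw [this, Finset.sum_mul]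
    rw [Finset.sum_congr rfl hT]
    ring
  -- assemble
  have hS : (∑ j ∈ univ.erase α, (a - p j)⁻¹) - (∑ j, (a - q j)⁻¹) = μ := by
    simpa [one_div] using h
  simp only [eval_sub, eval_add, eval_mul, eval_C, hP0, hP1, hP2, hQ0, hQ1, eval_ofNat]
  linear_combination (2 * D * E) * hS

/-- If the distinct vortex positions p, q satisfy the system (trans), then the
generating polynomials P = Π(z−p_j), Q = Π(z−q_j) satisfy the generalized
Tkachenko equation P''Q − 2P'Q' + PQ'' = 2μ(P'Q − PQ'). -/
theorem generating_polys_satisfy_tkachenko {n : ℕ} (μ : ℂ)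
    (p q : Fin n → ℂ)
    (hp : Function.Injective p) (hq : Function.Injective q)
    (hpq : ∀ i j, p i ≠ q j)
    (h1 : ∀ α : Fin n,
      (∑ j ∈ Finset.univ.erase α, 1 / (p α - p j)) - (∑ j, 1 / (p α - q j)) = μ)
    (h2 : ∀ α : Fin n,
      (∑ j ∈ Finset.univ.erase α, 1 / (q α - q j)) - (∑ j, 1 / (q α - p j)) = -μ) :
    let P : Polynomial ℂ := ∏ j, (X - C (p j))
    let Q : Polynomial ℂ := ∏ j, (X - C (q j))
    derivative (derivative P) * Q - 2 * derivative P * derivative Q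
        + P * derivative (derivative Q)
      = C (2 * μ) * (derivative P * Q - P * derivative Q) := by
  intro P Q
  rcases Nat.eq_zero_or_pos n with hn | hn
  · subst hn
    simp [P, Q]
  set F : ℂ[X] := derivative (derivative P) * Q - 2 * derivative P * derivative Q
      + P * derivative (derivative Q)
      - C (2 * μ) * (derivative P * Q - P * derivative Q) with hF
  have hFzero : F = 0 := by
    apply Polynomial.eq_zero_of_natDegree_lt_card_of_eval_eq_zero F
      (f := Sum.elim p q) (ι := Fin n ⊕ Fin n)
    · rintro (i | i) (j | j) h
      · exact congrArg Sum.inl (hp h)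
      · exact absurd h (hpq i j)
      · exact absurd h.symm (hpq j i)
      · exact congrArg Sum.inr (hq h)
    · rintro (i | i)
      · exact tk_eval μ p q hp hpq i (h1 i)
      · have key := tk_eval (-μ) q p hq (fun a b => (hpq b a).symm) i (h2 i)
        have hpoly : derivative (derivative Q) * P - 2 * derivative Q * derivative P
            + Q * derivative (derivative P)
            - C (2 * (-μ)) * (derivative Q * P - Q * derivative P) = F := by
          rw [show (2:ℂ) * (-μ) = -(2*μ) by ring, map_neg, hF]
          ring
        show eval (q i) F = 0
        rw [← hpoly]
        exact key
    · -- degree bound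
      have hPd : P.natDegree ≤ n := by
        refine (Polynomial.natDegree_prod_le _ _).trans ?_
        simp [natDegree_X_sub_C]
      have hQd : Q.natDegree ≤ n := by
        refine (Polynomial.natDegree_prod_le _ _).trans ?_
        simp [natDegree_X_sub_C]
      have hP1 : (derivative P).natDegree ≤ n - 1 :=
        (Polynomial.natDegree_derivative_le P).trans (Nat.sub_le_sub_right hPd 1)
      have hQ1 : (derivative Q).natDegree ≤ n - 1 :=
        (Polynomial.natDegree_derivative_le Q).trans (Nat.sub_le_sub_right hQd 1)
      have hP2 : (derivative (derivative P)).natDegree ≤ n - 1 :=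
        (Polynomial.natDegree_derivative_le _).trans (Nat.le_trans (Nat.sub_le _ _) hP1)
      have hQ2 : (derivative (derivative Q)).natDegree ≤ n - 1 :=
        (Polynomial.natDegree_derivative_le _).trans (Nat.le_trans (Nat.sub_le _ _) hQ1)
      have hcard : Fintype.card (Fin n ⊕ Fin n) = 2 * n := by simp; ring
      rw [hcard]
      have b1 : (derivative (derivative P) * Q).natDegree ≤ 2*n - 1 :=
        (natDegree_mul_le).trans (by omega)
      have b2 : (2 * derivative P * derivative Q).natDegree ≤ 2*n - 1 := by
        refine (natDegree_mul_le).trans ?_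
        have : ((2 : ℂ[X]) * derivative P).natDegree ≤ n - 1 :=
          (natDegree_mul_le).trans (by simpa using hP1)
        omega
      have b3 : (P * derivative (derivative Q)).natDegree ≤ 2*n - 1 :=
        (natDegree_mul_le).trans (by omega)
      have b4 : (C (2 * μ) * (derivative P * Q - P * derivative Q)).natDegree ≤ 2*n - 1 := by
        refine (natDegree_mul_le).trans ?_
        have i1 : (derivative P * Q).natDegree ≤ 2*n - 1 := (natDegree_mul_le).trans (by omega)
        have i2 : (P * derivative Q).natDegree ≤ 2*n - 1 := (natDegree_mul_le).trans (by omega)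
        rw [natDegree_C, zero_add]
        exact (natDegree_sub_le _ _).trans (max_le i1 i2)
      have : F.natDegree ≤ 2*n - 1 := by
        rw [hF]
        refine (natDegree_sub_le _ _).trans (max_le ?_ b4)
        refine (natDegree_add_le _ _).trans (max_le ?_ b3)
        exact (natDegree_sub_le _ _).trans (max_le b1 b2)
      omega
  exact sub_eq_zero.mp hFzero
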